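/- Let G be a simple graph on n vertices with maximum degree at most d, where d ≥ 2 and n ≥ 2, and let (B_v) be a family of measurable events, one per vertex, in a probability space. Suppose that P(B_v) ≤ 1/(8d³) for every vertex v, and that for every vertex set W whose pairwise G-distances are all at least 3 one has P(⋂_{v∈W} B_v) ≤ ∏_{v∈W} P(B_v). Then with probability at least 1 − 1/n, every vertex set S such that the subgraph of G induced on S is connected and B_v occurs for every v ∈ S has size at most d³·(2·log₂ n + 1). -/

import Mathlib

open MeasureTheory
open scoped ENNReal

namespace PACSS

open Finset SimpleGraph

set_option linter.unusedSectionVars false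

variable {V : Type*} [Fintype V] [DecidableEq V]

/-- A rooted spanning tree structure on a finite vertex set `T` in graph `H`. -/
def TreeAt (H : SimpleGraph V) (v₀ : V) (T : Finset V) (par : V → V) : Prop :=
  v₀ ∈ T ∧ par v₀ = v₀ ∧
    ∀ u ∈ T, u ≠ v₀ → par u ∈ T ∧ H.Adj (par u) u ∧ ∃ k, par^[k] u = v₀

variable {H : SimpleGraph V} {v₀ : V} {T : Finset V} {par : V → V}

lemma TreeAt.chain_mem (h : TreeAt H v₀ T par) {u : V} (hu : u ∈ T) :
    ∀ k, par^[k] u ∈ T := by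
  intro k
  induction k with
  | zero => simpa using hu
  | succ k ih =>
    rw [Function.iterate_succ_apply']
    by_cases hx : par^[k] u = v₀
    · rw [hx, h.2.1]; exact h.1
    · exact (h.2.2 _ ih hx).1

lemma iterate_update_of_forall_ne {a b u : V} (par : V → V) :
    ∀ j, (∀ i, i < j → par^[i] u ≠ a) → (Function.update par a b)^[j] u = par^[j] u := by
  intro j
  induction j with
  | zero => intro _; rfl
  | succ j ih =>
    intro hne
    rw [Function.iterate_succ_apply', Function.iterate_succ_apply',
      ih (fun i hi => hne i (hi.trans (Nat.lt_succ_self j))),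
      Function.update_of_ne (hne j (Nat.lt_succ_self j))]

lemma TreeAt.iterate_update (h : TreeAt H v₀ T par) {y b : V} (hy : y ∉ T) {x : V}
    (hx : x ∈ T) : ∀ k, (Function.update par y b)^[k] x = par^[k] x := fun k =>
  iterate_update_of_forall_ne par k (fun i _ he => hy (he ▸ h.chain_mem hx i))

lemma TreeAt.chain_exists (h : TreeAt H v₀ T par) {x : V} (hx : x ∈ T) :
    ∃ k, par^[k] x = v₀ := by
  by_cases hxv : x = v₀
  · exact ⟨0, hxv⟩
  · exact (h.2.2 x hx hxv).2.2

lemma treeAt_insert (h : TreeAt H v₀ T par) {y x₀ : V} (hy : y ∉ T) (hx : x₀ ∈ T)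
    (hadj : H.Adj x₀ y) : TreeAt H v₀ (insert y T) (Function.update par y x₀) := by
  have hv₀T := h.1
  have hv₀y : v₀ ≠ y := fun he => hy (he ▸ hv₀T)
  refine ⟨mem_insert_of_mem hv₀T, ?_, ?_⟩
  · rw [Function.update_of_ne hv₀y, h.2.1]
  intro u hu hne
  rcases mem_insert.mp hu with rfl | huT
  · refine ⟨?_, ?_, ?_⟩
    · rw [Function.update_self]; exact mem_insert_of_mem hx
    · rw [Function.update_self]; exact hadj
    · obtain ⟨k, hk⟩ := h.chain_exists hx
      exact ⟨k + 1, by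
        rw [Function.iterate_succ_apply, Function.update_self, h.iterate_update hy hx, hk]⟩
  · have huy : u ≠ y := fun he => hy (he ▸ huT)
    obtain ⟨h1, h2, k, hk⟩ := h.2.2 u huT hne
    have hupd : Function.update par y x₀ u = par u := Function.update_of_ne huy _ _
    refine ⟨?_, ?_, ⟨k, ?_⟩⟩
    · rw [hupd]; exact mem_insert_of_mem h1
    · rw [hupd]; exact h2
    · rw [h.iterate_update hy huT, hk]

lemma exists_child (h : TreeAt H v₀ T par) {u : V} (hu : u ∈ T) (hne : u ≠ v₀) :
    ∃ c, c ∈ T ∧ c ≠ v₀ ∧ par c = v₀ ∧ H.Adj v₀ c := by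
  classical
  obtain ⟨k, hk⟩ := (h.2.2 u hu hne).2.2
  have hex : ∃ k, par^[k] u = v₀ := ⟨k, hk⟩
  have hspec := Nat.find_spec hex
  have hk₀pos : Nat.find hex ≠ 0 := by
    intro h0; rw [h0] at hspec; exact hne (by simpa using hspec)
  obtain ⟨k₁, hk₁⟩ := Nat.exists_eq_succ_of_ne_zero hk₀pos
  set c := par^[k₁] u with hc
  have hcT : c ∈ T := h.chain_mem hu k₁
  have hcv : c ≠ v₀ := fun he => (Nat.find_min hex (by omega : k₁ < Nat.find hex)) he
  have hpc : par c = v₀ := by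
    have hs : par^[k₁.succ] u = v₀ := by rw [← hk₁]; exact hspec
    rw [Function.iterate_succ_apply'] at hs
    rw [hc]; exact hs
  have hadj : H.Adj v₀ c := by
    have h2 := (h.2.2 c hcT hcv).2.1; rwa [hpc] at h2
  exact ⟨c, hcT, hcv, hpc, hadj⟩

lemma treeAt_desc {c : V} [DecidablePred fun u => ∃ j, par^[j] u = c]
    (h : TreeAt H v₀ T par) (hc : c ∈ T) (hcv : c ≠ v₀) (hpc : par c = v₀) :
    TreeAt H c (T.filter fun u => ∃ j, par^[j] u = c) (Function.update par c c) := by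
  classical
  refine ⟨mem_filter.mpr ⟨hc, 0, rfl⟩, Function.update_self _ _ _, ?_⟩
  intro u hu hne
  obtain ⟨huT, j, hj⟩ := mem_filter.mp hu
  have huv₀ : u ≠ v₀ := by
    intro he
    rw [he] at hj
    exact hcv ((Function.iterate_fixed h.2.1 j).symm.trans hj).symm
  obtain ⟨hp1, hp2, -⟩ := h.2.2 u huT huv₀
  obtain ⟨j', rfl⟩ : ∃ j', j = j' + 1 := by
    cases j with
    | zero => rw [Function.iterate_zero_apply] at hj; exact absurd hj hne
    | succ j' => exact ⟨j', rfl⟩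
  have hpu_mem : par u ∈ T.filter fun u => ∃ j, par^[j] u = c :=
    mem_filter.mpr ⟨hp1, j', by rw [← Function.iterate_succ_apply]; exact hj⟩
  have hupd : Function.update par c c u = par u := Function.update_of_ne hne _ _
  refine ⟨?_, ?_, ?_⟩
  · rw [hupd]; exact hpu_mem
  · rw [hupd]; exact hp2
  · have hex : ∃ i, par^[i] u = c := ⟨j' + 1, hj⟩
    exact ⟨Nat.find hex, by
      rw [iterate_update_of_forall_ne par _ (fun i hi => Nat.find_min hex hi)]
      exact Nat.find_spec hex⟩

lemma treeAt_rest {c : V} [DecidablePred fun u => ∃ j, par^[j] u = c]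
    (h : TreeAt H v₀ T par) (hcv : c ≠ v₀) :
    TreeAt H v₀ (T \ T.filter fun u => ∃ j, par^[j] u = c) par := by
  have hv₀ : v₀ ∈ T \ T.filter fun u => ∃ j, par^[j] u = c := by
    refine mem_sdiff.mpr ⟨h.1, fun hmem => ?_⟩
    obtain ⟨-, j, hj⟩ := mem_filter.mp hmem
    exact hcv ((Function.iterate_fixed h.2.1 j).symm.trans hj).symm
  refine ⟨hv₀, h.2.1, ?_⟩
  intro u hu hne
  obtain ⟨huT, hunot⟩ := mem_sdiff.mp hu
  obtain ⟨hp1, hp2, hp3⟩ := h.2.2 u huT hne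
  refine ⟨mem_sdiff.mpr ⟨hp1, fun hmem => ?_⟩, hp2, hp3⟩
  obtain ⟨-, j, hj⟩ := mem_filter.mp hmem
  exact hunot (mem_filter.mpr ⟨huT, j + 1, by rw [Function.iterate_succ_apply]; exact hj⟩)

end PACSS
namespace PACSS

open Finset SimpleGraph

set_option linter.unusedSectionVars false

variable {V : Type*} [Fintype V] [DecidableEq V] {H : SimpleGraph V} {v₀ : V}

/-- The finset of all `t`-element vertex sets carrying a tree structure rooted at `v₀`. -/
noncomputable def treeSet (H : SimpleGraph V) (v₀ : V) (t : ℕ) : Finset (Finset V) :=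
  @Finset.filter _ (fun T => T.card = t ∧ ∃ par, TreeAt H v₀ T par)
    (Classical.decPred _) Finset.univ

lemma mem_treeSet {t : ℕ} {T : Finset V} :
    T ∈ treeSet H v₀ t ↔ T.card = t ∧ ∃ par, TreeAt H v₀ T par := by
  rw [treeSet]
  exact (@Finset.mem_filter _ _ (Classical.decPred _) _ _).trans
    (and_iff_right (Finset.mem_univ _))

noncomputable def pc (H : SimpleGraph V) (v₀ : V) (T : Finset V) : V → V :=
  @dite _ (∃ p, TreeAt H v₀ T p) (Classical.propDecidable _) (fun h => h.choose) (fun _ => id)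

lemma pc_spec {T : Finset V} (h : ∃ p, TreeAt H v₀ T p) : TreeAt H v₀ T (pc H v₀ T) := by
  rw [pc, dif_pos h]; exact h.choose_spec

noncomputable def ch (H : SimpleGraph V) (v₀ : V) (T : Finset V) : V :=
  @dite _ (∃ c, c ∈ T ∧ c ≠ v₀ ∧ pc H v₀ T c = v₀ ∧ H.Adj v₀ c) (Classical.propDecidable _)
    (fun h => h.choose) (fun _ => v₀)

lemma ch_spec {T : Finset V}
    (h : ∃ c, c ∈ T ∧ c ≠ v₀ ∧ pc H v₀ T c = v₀ ∧ H.Adj v₀ c) :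
    ch H v₀ T ∈ T ∧ ch H v₀ T ≠ v₀ ∧ pc H v₀ T (ch H v₀ T) = v₀ ∧ H.Adj v₀ (ch H v₀ T) := by
  rw [ch, dif_pos h]; exact h.choose_spec

noncomputable def dsc (H : SimpleGraph V) (v₀ : V) (T : Finset V) : Finset V :=
  @Finset.filter _ (fun u => ∃ j, (pc H v₀ T)^[j] u = ch H v₀ T) (Classical.decPred _) T

lemma mem_dsc {T : Finset V} {u : V} :
    u ∈ dsc H v₀ T ↔ u ∈ T ∧ ∃ j, (pc H v₀ T)^[j] u = ch H v₀ T := by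
  rw [dsc]; exact @Finset.mem_filter _ _ (Classical.decPred _) _ _

lemma dsc_subset {T : Finset V} : dsc H v₀ T ⊆ T := fun u hu => (mem_dsc.mp hu).1

lemma card_treeSet_le (H : SimpleGraph V) [DecidableRel H.Adj] {D : ℕ}
    (hD : ∀ v, H.degree v ≤ D) :
    ∀ t : ℕ, ∀ v₀ : V, (treeSet H v₀ t).card ≤ catalan (t - 1) * D ^ (t - 1) := by
  intro t
  induction t using Nat.strong_induction_on with
  | _ t ih =>
    intro v₀
    match t with
    | 0 =>
      have he : treeSet H v₀ 0 = ∅ := by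
        ext T
        simp only [mem_treeSet, Finset.notMem_empty, iff_false, not_and]
        intro hc
        rw [Finset.card_eq_zero] at hc
        rintro ⟨par, htree⟩
        rw [hc] at htree
        exact absurd htree.1 (Finset.notMem_empty _)
      rw [he]
      simp
    | 1 =>
      have hsub : treeSet H v₀ 1 ⊆ {{v₀}} := by
        intro T hT
        obtain ⟨hc, par, htree⟩ := mem_treeSet.mp hT
        obtain ⟨a, rfl⟩ := Finset.card_eq_one.mp hc
        have hv := htree.1
        rw [Finset.mem_singleton] at hv
        rw [Finset.mem_singleton, hv]
      have := Finset.card_le_card hsub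
      simp only [Finset.card_singleton] at this
      simpa using this
    | (m + 2) =>
      classical
      set tgt : Finset ((_ : ℕ) × (_ : V) × Finset V × Finset V) :=
        (Finset.range (m + 1)).sigma fun s => (H.neighborFinset v₀).sigma fun c =>
          (treeSet H c (s + 1)) ×ˢ (treeSet H v₀ (m + 1 - s)) with htgt
      have hmaps : ∀ T ∈ treeSet H v₀ (m + 2),
          (⟨(dsc H v₀ T).card - 1, ch H v₀ T, (dsc H v₀ T, T \ dsc H v₀ T)⟩ :
            (_ : ℕ) × (_ : V) × Finset V × Finset V) ∈ tgt := by
        intro T hT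
        obtain ⟨hcard, hex⟩ := mem_treeSet.mp hT
        have htree : TreeAt H v₀ T (pc H v₀ T) := pc_spec hex
        obtain ⟨u, huT, hune⟩ :=
          Finset.exists_mem_ne (by omega : 1 < T.card) v₀
        obtain ⟨hcT, hcne, hpcc, hadj⟩ := ch_spec (exists_child htree huT hune)
        have hcD : ch H v₀ T ∈ dsc H v₀ T :=
          mem_dsc.mpr ⟨hcT, 0, Function.iterate_zero_apply _ _⟩
        have hv₀D : v₀ ∉ dsc H v₀ T := by
          intro hmem
          obtain ⟨-, j, hj⟩ := mem_dsc.mp hmem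
          exact hcne ((Function.iterate_fixed htree.2.1 j).symm.trans hj).symm
        have h1le : 1 ≤ (dsc H v₀ T).card := Finset.card_pos.mpr ⟨_, hcD⟩
        have hlt : (dsc H v₀ T).card < T.card :=
          Finset.card_lt_card ((Finset.ssubset_iff_of_subset dsc_subset).mpr
            ⟨v₀, htree.1, hv₀D⟩)
        have hdD : dsc H v₀ T ∈ treeSet H (ch H v₀ T) ((dsc H v₀ T).card - 1 + 1) := by
          rw [mem_treeSet]
          refine ⟨by omega, Function.update (pc H v₀ T) (ch H v₀ T) (ch H v₀ T), ?_⟩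
          have hde : dsc H v₀ T = T.filter (fun u => ∃ j, (pc H v₀ T)^[j] u = ch H v₀ T) := by
            rw [dsc]
          rw [hde]
          exact treeAt_desc htree hcT hcne hpcc
        have hdR : T \ dsc H v₀ T ∈ treeSet H v₀ (m + 1 - ((dsc H v₀ T).card - 1)) := by
          rw [mem_treeSet]
          constructor
          · rw [Finset.card_sdiff_of_subset dsc_subset, hcard]; omega
          · refine ⟨pc H v₀ T, ?_⟩
            have hde : dsc H v₀ T = T.filter (fun u => ∃ j, (pc H v₀ T)^[j] u = ch H v₀ T) := by
              rw [dsc]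
            rw [hde]
            exact treeAt_rest htree hcne
        rw [htgt]
        refine Finset.mem_sigma.mpr ⟨?_, ?_⟩
        · exact Finset.mem_range.mpr (show (dsc H v₀ T).card - 1 < m + 1 by omega)
        refine Finset.mem_sigma.mpr ⟨(SimpleGraph.mem_neighborFinset _ _ _).mpr hadj, ?_⟩
        exact Finset.mem_product.mpr ⟨hdD, hdR⟩
      have hinj : Set.InjOn
          (fun T : Finset V =>
            (⟨(dsc H v₀ T).card - 1, ch H v₀ T, (dsc H v₀ T, T \ dsc H v₀ T)⟩ :
              (_ : ℕ) × (_ : V) × Finset V × Finset V))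
          (treeSet H v₀ (m + 2)) := by
        intro T₁ h₁ T₂ h₂ heq
        have hd : dsc H v₀ T₁ = dsc H v₀ T₂ := congrArg (fun x => x.snd.snd.fst) heq
        have hr : T₁ \ dsc H v₀ T₁ = T₂ \ dsc H v₀ T₂ :=
          congrArg (fun x => x.snd.snd.snd) heq
        have e1 : T₁ = dsc H v₀ T₁ ∪ (T₁ \ dsc H v₀ T₁) :=
          (Finset.union_sdiff_of_subset dsc_subset).symm
        have e2 : T₂ = dsc H v₀ T₂ ∪ (T₂ \ dsc H v₀ T₂) :=
          (Finset.union_sdiff_of_subset dsc_subset).symm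
        calc T₁ = dsc H v₀ T₁ ∪ (T₁ \ dsc H v₀ T₁) := e1
          _ = dsc H v₀ T₂ ∪ (T₂ \ dsc H v₀ T₂) := by rw [hr, hd]
          _ = T₂ := e2.symm
      have hcards := Finset.card_le_card_of_injOn _ hmaps hinj
      have htc : tgt.card = ∑ s ∈ Finset.range (m + 1), ∑ c ∈ H.neighborFinset v₀,
          (treeSet H c (s + 1)).card * (treeSet H v₀ (m + 1 - s)).card := by
        rw [htgt, Finset.card_sigma]
        refine Finset.sum_congr rfl fun s _ => ?_
        rw [Finset.card_sigma]
        exact Finset.sum_congr rfl fun c _ => Finset.card_product _ _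
      have hbound : tgt.card ≤ catalan (m + 1) * D ^ (m + 1) := by
        rw [htc]
        calc ∑ s ∈ Finset.range (m + 1), ∑ c ∈ H.neighborFinset v₀,
            (treeSet H c (s + 1)).card * (treeSet H v₀ (m + 1 - s)).card
            ≤ ∑ s ∈ Finset.range (m + 1), ∑ _c ∈ H.neighborFinset v₀,
              (catalan s * D ^ s) * (catalan (m - s) * D ^ (m - s)) := by
              refine Finset.sum_le_sum fun s hs => Finset.sum_le_sum fun c _ => ?_
              have hs' := Finset.mem_range.mp hs
              have i1 := ih (s + 1) (by omega) c
              have i2 := ih (m + 1 - s) (by omega) v₀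
              simp only [Nat.add_sub_cancel] at i1
              have hms : m + 1 - s - 1 = m - s := by omega
              rw [hms] at i2
              exact Nat.mul_le_mul i1 i2
          _ = ∑ s ∈ Finset.range (m + 1), (H.neighborFinset v₀).card *
              ((catalan s * D ^ s) * (catalan (m - s) * D ^ (m - s))) := by
              refine Finset.sum_congr rfl fun s _ => ?_
              rw [Finset.sum_const, smul_eq_mul]
          _ ≤ ∑ s ∈ Finset.range (m + 1), D *
              ((catalan s * D ^ s) * (catalan (m - s) * D ^ (m - s))) := by
              refine Finset.sum_le_sum fun s _ => Nat.mul_le_mul_right _ (hD v₀)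
          _ = ∑ s ∈ Finset.range (m + 1),
              (catalan s * catalan (m - s)) * D ^ (m + 1) := by
              refine Finset.sum_congr rfl fun s hs => ?_
              have hs' := Finset.mem_range.mp hs
              have hpow : D ^ s * D ^ (m - s) = D ^ m := by
                rw [← pow_add, Nat.add_sub_cancel' (by omega : s ≤ m)]
              calc D * ((catalan s * D ^ s) * (catalan (m - s) * D ^ (m - s)))
                  = (catalan s * catalan (m - s)) * (D ^ s * D ^ (m - s) * D) := by
                    ring
                _ = (catalan s * catalan (m - s)) * D ^ (m + 1) := by
                    rw [hpow, ← pow_succ]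
          _ = (∑ s ∈ Finset.range (m + 1), catalan s * catalan (m - s)) *
              D ^ (m + 1) := by rw [← Finset.sum_mul]
          _ = catalan (m + 1) * D ^ (m + 1) := by
              congr 1
              rw [catalan_succ]
              exact Finset.sum_range fun i => catalan i * catalan (m - i)
      calc (treeSet H v₀ (m + 2)).card ≤ tgt.card := hcards
        _ ≤ catalan (m + 1) * D ^ (m + 1) := hbound
        _ = catalan (m + 2 - 1) * D ^ (m + 2 - 1) := by norm_num

end PACSS
namespace PACSS

open Finset SimpleGraph

set_option linter.unusedSectionVars false

variable {V : Type*} [Fintype V] [DecidableEq V]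

lemma card_le_of_edist_eq (G : SimpleGraph V) [DecidableRel G.Adj] {d : ℕ}
    (hdeg : ∀ v, G.degree v ≤ d) (v : V) :
    ∀ (k : ℕ) (A : Finset V), (∀ u ∈ A, G.edist v u = (k : ℕ∞)) → A.card ≤ d ^ k := by
  intro k
  induction k with
  | zero =>
    intro A hA
    have : A ⊆ {v} := by
      intro u hu
      have h0 := hA u hu
      rw [Nat.cast_zero, SimpleGraph.edist_eq_zero_iff] at h0
      rw [Finset.mem_singleton, h0]
    simpa using Finset.card_le_card this
  | succ k ih =>
    intro A hA
    have hw : ∀ u : V, ∃ x : V, u ∈ A → G.Adj x u ∧ G.edist v x = (k : ℕ∞) := by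
      intro u
      by_cases hu : u ∈ A
      · obtain ⟨p, hp⟩ := SimpleGraph.exists_walk_of_edist_eq_coe (hA u hu)
        have hrl : p.reverse.length = k + 1 := by rw [SimpleGraph.Walk.length_reverse]; exact hp
        cases hq : p.reverse with
        | nil =>
          rw [hq] at hrl; simp at hrl
        | @cons _ w _ hadj q =>
          rw [hq] at hrl
          simp only [SimpleGraph.Walk.length_cons] at hrl
          have hql : q.length = k := by omega
          have h1 : G.edist v w ≤ (k : ℕ∞) := by
            have := SimpleGraph.Walk.edist_le q.reverse
            rwa [SimpleGraph.Walk.length_reverse, hql] at this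
          have h2 : (k : ℕ∞) ≤ G.edist v w := by
            have htri : G.edist v u ≤ G.edist v w + G.edist w u := SimpleGraph.edist_triangle
            have hwu : G.edist w u ≤ 1 := by
              rw [SimpleGraph.edist_comm]
              exact le_of_eq (SimpleGraph.edist_eq_one_iff_adj.mpr hadj)
            have hvu : G.edist v u = (k : ℕ∞) + 1 := by
              rw [hA u hu]; push_cast; ring
            have hle : (k : ℕ∞) + 1 ≤ G.edist v w + 1 := by
              calc (k : ℕ∞) + 1 = G.edist v u := hvu.symm
                _ ≤ G.edist v w + G.edist w u := htri
                _ ≤ G.edist v w + 1 := add_le_add (le_refl _) hwu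
            have hne : G.edist v w ≠ ⊤ := ne_top_of_le_ne_top (by simp) h1
            lift G.edist v w to ℕ using hne with j hj
            have hnat : k + 1 ≤ j + 1 := by exact_mod_cast hle
            exact_mod_cast (by omega : k ≤ j)
          exact ⟨w, fun _ => ⟨hadj.symm, le_antisymm h1 h2⟩⟩
      · exact ⟨v, fun h => absurd h hu⟩
    choose w hw using hw
    have hsub : A ⊆ (A.image w).biUnion (fun x => G.neighborFinset x) := by
      intro u hu
      exact Finset.mem_biUnion.mpr ⟨w u, Finset.mem_image_of_mem _ hu,
        (SimpleGraph.mem_neighborFinset _ _ _).mpr (hw u hu).1⟩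
    calc A.card ≤ ((A.image w).biUnion (fun x => G.neighborFinset x)).card :=
          Finset.card_le_card hsub
      _ ≤ ∑ x ∈ A.image w, (G.neighborFinset x).card := Finset.card_biUnion_le
      _ ≤ ∑ _x ∈ A.image w, d := Finset.sum_le_sum fun x _ => hdeg x
      _ = (A.image w).card * d := by rw [Finset.sum_const, smul_eq_mul]
      _ ≤ d ^ k * d := by
          refine Nat.mul_le_mul_right _ (ih _ ?_)
          intro x hx
          obtain ⟨u, hu, rfl⟩ := Finset.mem_image.mp hx
          exact (hw u hu).2
      _ = d ^ (k + 1) := (pow_succ d k).symm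

lemma card_le_of_edist_le_two (G : SimpleGraph V) [DecidableRel G.Adj] {d : ℕ}
    (hdeg : ∀ v, G.degree v ≤ d) (v : V) (A : Finset V)
    (hA : ∀ u ∈ A, G.edist v u ≤ 2) : A.card ≤ 1 + d + d ^ 2 := by
  classical
  have hmem : ∀ u ∈ A, u ∈ A.filter (fun u => G.edist v u = ((0 : ℕ) : ℕ∞)) ∪
      A.filter (fun u => G.edist v u = ((1 : ℕ) : ℕ∞)) ∪
      A.filter (fun u => G.edist v u = ((2 : ℕ) : ℕ∞)) := by
    intro u hu
    have hne : G.edist v u ≠ ⊤ := ne_top_of_le_ne_top (by simp) (hA u hu)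
    have h2 := hA u hu
    lift G.edist v u to ℕ using hne with j hj
    have hj2 : j ≤ 2 := by exact_mod_cast h2
    simp only [Finset.mem_union, Finset.mem_filter]
    interval_cases j
    · exact Or.inl (Or.inl ⟨hu, hj.symm⟩)
    · exact Or.inl (Or.inr ⟨hu, hj.symm⟩)
    · exact Or.inr ⟨hu, hj.symm⟩
  calc A.card ≤ _ := Finset.card_le_card (fun u hu => hmem u hu)
    _ ≤ (A.filter (fun u => G.edist v u = ((0 : ℕ) : ℕ∞)) ∪
          A.filter (fun u => G.edist v u = ((1 : ℕ) : ℕ∞))).card +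
        (A.filter (fun u => G.edist v u = ((2 : ℕ) : ℕ∞))).card := Finset.card_union_le _ _
    _ ≤ ((A.filter (fun u => G.edist v u = ((0 : ℕ) : ℕ∞))).card +
        (A.filter (fun u => G.edist v u = ((1 : ℕ) : ℕ∞))).card) +
        (A.filter (fun u => G.edist v u = ((2 : ℕ) : ℕ∞))).card :=
          Nat.add_le_add_right (Finset.card_union_le _ _) _
    _ ≤ 1 + d + d ^ 2 := by
        have h0 := card_le_of_edist_eq G hdeg v 0
          (A.filter (fun u => G.edist v u = ((0 : ℕ) : ℕ∞)))
          (fun u hu => (Finset.mem_filter.mp hu).2)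
        have h1 := card_le_of_edist_eq G hdeg v 1
          (A.filter (fun u => G.edist v u = ((1 : ℕ) : ℕ∞)))
          (fun u hu => (Finset.mem_filter.mp hu).2)
        have h2 := card_le_of_edist_eq G hdeg v 2
          (A.filter (fun u => G.edist v u = ((2 : ℕ) : ℕ∞)))
          (fun u hu => (Finset.mem_filter.mp hu).2)
        rw [pow_zero] at h0
        rw [pow_one] at h1
        exact Nat.add_le_add (Nat.add_le_add h0 h1) h2

lemma walk_ivt {α : Type*} {G' : SimpleGraph α} (f : α → ℕ∞)
    (hlip : ∀ a b, G'.Adj a b → f b ≤ f a + 1) :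
    ∀ {a b : α}, G'.Walk a b → f a ≤ 3 → 3 ≤ f b → ∃ c, f c = 3 := by
  intro a b w
  induction w with
  | nil => exact fun h1 h2 => ⟨_, le_antisymm h1 h2⟩
  | @cons x y z h p ih =>
    intro h1 h2
    rcases eq_or_lt_of_le h1 with he | hlt
    · exact ⟨x, he⟩
    · have hy : f y ≤ 3 := by
        have := hlip _ _ h
        have h3 : f x + 1 ≤ 3 := by
          have hne : f x ≠ ⊤ := ne_top_of_lt hlt
          exact (ENat.add_one_le_iff hne).mpr hlt
        exact le_trans this h3
      exact ih hy h2

lemma extract (G : SimpleGraph V) [DecidableRel G.Adj] {d : ℕ}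
    (hdeg : ∀ v, G.degree v ≤ d)
    (H : SimpleGraph V) (hH : ∀ u v, G.edist u v = 3 → H.Adj u v)
    (S : Finset V) (hconn : (G.induce (S : Set V)).Connected) :
    ∀ t : ℕ, t * (1 + d + d ^ 2) < S.card →
      ∃ T : Finset V, T ⊆ S ∧ T.card = t + 1 ∧
        (∀ u ∈ T, ∀ v ∈ T, u ≠ v → 3 ≤ G.edist u v) ∧
        ∃ v₀ par, TreeAt H v₀ T par := by
  classical
  intro t
  induction t with
  | zero =>
    intro hsize
    rw [Nat.zero_mul] at hsize
    obtain ⟨s, hs⟩ := Finset.card_pos.mp hsize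
    refine ⟨{s}, by simpa using hs, Finset.card_singleton s, ?_, s, id, ?_⟩
    · intro u hu v hv huv
      rw [Finset.mem_singleton] at hu hv
      exact absurd (hu.trans hv.symm) huv
    · refine ⟨Finset.mem_singleton_self s, rfl, ?_⟩
      intro u hu hne
      rw [Finset.mem_singleton] at hu
      exact absurd hu hne
  | succ t ih =>
    intro hsize
    obtain ⟨T, hTS, hTcard, hTsep, v₀, par, htree⟩ :=
      ih (lt_of_le_of_lt (Nat.mul_le_mul_right _ (Nat.le_succ t)) hsize)
    set N₂ : Finset V := T.biUnion (fun x => Finset.univ.filter (fun u => G.edist x u ≤ 2))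
      with hN₂
    have hN₂card : N₂.card ≤ (t + 1) * (1 + d + d ^ 2) := by
      calc N₂.card ≤ ∑ x ∈ T, (Finset.univ.filter (fun u => G.edist x u ≤ 2)).card :=
            Finset.card_biUnion_le
        _ ≤ ∑ _x ∈ T, (1 + d + d ^ 2) := Finset.sum_le_sum fun x _ =>
            card_le_of_edist_le_two G hdeg x _ (fun u hu => (Finset.mem_filter.mp hu).2)
        _ = (t + 1) * (1 + d + d ^ 2) := by rw [Finset.sum_const, smul_eq_mul, hTcard]
    have hnsub : ¬ S ⊆ N₂ := by
      intro hsub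
      exact absurd (le_trans (Finset.card_le_card hsub) hN₂card) (not_le.mpr hsize)
    obtain ⟨s, hsS, hsN⟩ := Finset.not_subset.mp hnsub
    have hfar : ∀ x ∈ T, ¬ (G.edist x s ≤ 2) := by
      intro x hx hle
      exact hsN (Finset.mem_biUnion.mpr ⟨x, hx, Finset.mem_filter.mpr ⟨Finset.mem_univ _, hle⟩⟩)
    have hTne : T.Nonempty := Finset.card_pos.mp (by omega)
    have hv₀T : v₀ ∈ T := htree.1
    have hf0 : (T.inf fun x => G.edist x v₀) ≤ 3 := by
      calc (T.inf fun x => G.edist x v₀) ≤ G.edist v₀ v₀ := Finset.inf_le hv₀T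
        _ = 0 := SimpleGraph.edist_self
        _ ≤ 3 := zero_le
    have hfs : 3 ≤ T.inf fun x => G.edist x s := by
      refine Finset.le_inf fun x hx => ?_
      have := hfar x hx
      rw [not_le] at this
      have h3 : (2 : ℕ∞) + 1 ≤ G.edist x s := (ENat.add_one_le_iff (by simp)).mpr this
      calc (3 : ℕ∞) = 2 + 1 := by norm_num
        _ ≤ G.edist x s := h3
    have hlip : ∀ a b : V, G.Adj a b →
        (T.inf fun x => G.edist x b) ≤ (T.inf fun x => G.edist x a) + 1 := by
      intro a b hab
      obtain ⟨x, hx, hfa⟩ := Finset.exists_mem_eq_inf T hTne (fun x => G.edist x a)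
      calc (T.inf fun x => G.edist x b) ≤ G.edist x b := Finset.inf_le hx
        _ ≤ G.edist x a + G.edist a b := SimpleGraph.edist_triangle
        _ ≤ G.edist x a + 1 := add_le_add (le_refl _)
            (le_of_eq (SimpleGraph.edist_eq_one_iff_adj.mpr hab))
        _ = (T.inf fun x => G.edist x a) + 1 := by rw [hfa]
    -- walk in the induced graph from v₀ to s
    have hv₀S : (v₀ : V) ∈ (S : Set V) := Finset.mem_coe.mpr (hTS hv₀T)
    have hsS' : (s : V) ∈ (S : Set V) := Finset.mem_coe.mpr hsS
    obtain ⟨w⟩ := hconn.preconnected ⟨v₀, hv₀S⟩ ⟨s, hsS'⟩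
    have hlip' : ∀ a b : (S : Set V), (G.induce (S : Set V)).Adj a b →
        (T.inf fun x => G.edist x b.val) ≤ (T.inf fun x => G.edist x a.val) + 1 := by
      intro a b hab
      exact hlip a.val b.val hab
    obtain ⟨c, hc⟩ :=
      walk_ivt (fun y : (S : Set V) => T.inf fun x => G.edist x y.val) hlip' w hf0 hfs
    have hysep : ∀ x ∈ T, 3 ≤ G.edist x c.val := by
      intro x hx
      rw [← hc]
      exact Finset.inf_le hx
    obtain ⟨x₀, hx₀T, hx₀⟩ := Finset.exists_mem_eq_inf T hTne (fun x => G.edist x c.val)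
    have hx₀3 : G.edist x₀ c.val = 3 := by rw [← hx₀]; exact hc
    have hcT : c.val ∉ T := by
      intro hmem
      have := hysep c.val hmem
      rw [SimpleGraph.edist_self] at this
      exact absurd this (by norm_num)
    have hcS : c.val ∈ S := Finset.mem_coe.mp c.property
    refine ⟨insert c.val T, ?_, ?_, ?_, v₀, Function.update par c.val x₀, ?_⟩
    · intro u hu
      rcases Finset.mem_insert.mp hu with rfl | h
      · exact hcS
      · exact hTS h
    · rw [Finset.card_insert_of_notMem hcT, hTcard]
    · intro u hu v hv huv
      rcases Finset.mem_insert.mp hu with rfl | hu' <;>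
        rcases Finset.mem_insert.mp hv with rfl | hv'
      · exact absurd rfl huv
      · rw [SimpleGraph.edist_comm]; exact hysep v hv'
      · exact hysep u hu'
      · exact hTsep u hu' v hv' huv
    · exact treeAt_insert htree hcT hx₀T (hH _ _ hx₀3)

end PACSS
open PACSS in
/-- Let `G` be a simple graph on `n ≥ 2` vertices with maximum degree at most `d ≥ 2`,
and `(B v)` events with `P(B v) ≤ 1/(8d³)` such that events indexed by vertices at
pairwise distance at least `3` are negatively correlated. Then with probability at
least `1 - 1/n`, every vertex set `S` inducing a connected subgraph all of whose
events occur has size at most `d³(2 log₂ n + 1)`. -/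
theorem prob_all_connected_surviving_small {V : Type*} [Fintype V] (G : SimpleGraph V)
    [DecidableRel G.Adj] (n d : ℕ) (hn : Fintype.card V = n) (hn2 : 2 ≤ n) (hd : 2 ≤ d)
    (hdeg : ∀ v, G.degree v ≤ d)
    {Ω : Type*} [MeasurableSpace Ω] (μ : Measure Ω) [IsProbabilityMeasure μ]
    (B : V → Set Ω) (hB : ∀ v, MeasurableSet (B v))
    (hp : ∀ v, μ (B v) ≤ 1 / (8 * (d : ℝ≥0∞) ^ 3))
    (hcorr : ∀ W : Finset V, (∀ u ∈ W, ∀ v ∈ W, u ≠ v → 3 ≤ G.edist u v) →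
      μ (⋂ v ∈ W, B v) ≤ ∏ v ∈ W, μ (B v)) :
    1 - 1 / (n : ℝ≥0∞) ≤
      μ {ω | ∀ S : Finset V, (G.induce (S : Set V)).Connected → (∀ v ∈ S, ω ∈ B v) →
        (S.card : ℝ) ≤ (d : ℝ) ^ 3 * (2 * Real.logb 2 n + 1)} := by
  classical
  set t' : ℕ := ⌈2 * Real.logb 2 n⌉₊ with ht'
  -- the distance-3 auxiliary graph
  let H₃ : SimpleGraph V :=
    { Adj := fun u v => G.edist u v = 3
      symm := ⟨fun u v h => by
        have h' : G.edist u v = 3 := h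
        show G.edist v u = 3
        rwa [SimpleGraph.edist_comm] at h'⟩
      loopless := ⟨fun v h => by
        have h' : G.edist v v = 3 := h
        rw [SimpleGraph.edist_self] at h'
        norm_num at h'⟩ }
  haveI : DecidableRel H₃.Adj := fun u v => Classical.propDecidable _
  have hH3deg : ∀ v, H₃.degree v ≤ d ^ 3 := by
    intro v
    show (H₃.neighborFinset v).card ≤ d ^ 3
    refine card_le_of_edist_eq G hdeg v 3 _ ?_
    intro u hu
    have h : H₃.Adj v u := (SimpleGraph.mem_neighborFinset _ _ _).mp hu
    have h' : G.edist v u = 3 := h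
    rw [h']
    norm_cast
  set 𝒯 : Finset (Finset V) := Finset.univ.filter (fun T : Finset V =>
    T.card = t' + 1 ∧ (∀ u ∈ T, ∀ v ∈ T, u ≠ v → 3 ≤ G.edist u v) ∧
      ∃ v₀ par, TreeAt H₃ v₀ T par) with h𝒯
  set bad : Set Ω := ⋃ T ∈ 𝒯, ⋂ v ∈ T, B v with hbad
  have hmeas : MeasurableSet bad := by
    refine MeasurableSet.biUnion 𝒯.countable_toSet (fun T _ => ?_)
    exact MeasurableSet.biInter T.countable_toSet (fun v _ => hB v)
  -- per-element probability bound
  have hperT : ∀ T ∈ 𝒯, μ (⋂ v ∈ T, B v) ≤ (1 / (8 * (d : ℝ≥0∞) ^ 3)) ^ (t' + 1) := by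
    intro T hT
    obtain ⟨hTcard, hTsep, -⟩ := (Finset.mem_filter.mp hT).2
    calc μ (⋂ v ∈ T, B v) ≤ ∏ v ∈ T, μ (B v) := hcorr T hTsep
      _ ≤ ∏ _v ∈ T, (1 / (8 * (d : ℝ≥0∞) ^ 3)) := Finset.prod_le_prod' (fun v _ => hp v)
      _ = (1 / (8 * (d : ℝ≥0∞) ^ 3)) ^ (t' + 1) := by rw [Finset.prod_const, hTcard]
  -- counting bound
  have hcount : 𝒯.card ≤ n * (catalan t' * (d ^ 3) ^ t') := by
    have hsub : 𝒯 ⊆ Finset.univ.biUnion (fun v₀ => treeSet H₃ v₀ (t' + 1)) := by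
      intro T hT
      obtain ⟨hTcard, -, v₀, par, htree⟩ := (Finset.mem_filter.mp hT).2
      exact Finset.mem_biUnion.mpr ⟨v₀, Finset.mem_univ _,
        mem_treeSet.mpr ⟨hTcard, par, htree⟩⟩
    calc 𝒯.card ≤ (Finset.univ.biUnion (fun v₀ => treeSet H₃ v₀ (t' + 1))).card :=
          Finset.card_le_card hsub
      _ ≤ ∑ v₀ ∈ Finset.univ, (treeSet H₃ v₀ (t' + 1)).card := Finset.card_biUnion_le
      _ ≤ ∑ _v₀ ∈ (Finset.univ : Finset V), catalan (t' + 1 - 1) * (d ^ 3) ^ (t' + 1 - 1) :=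
          Finset.sum_le_sum (fun v₀ _ => card_treeSet_le H₃ hH3deg (t' + 1) v₀)
      _ = n * (catalan t' * (d ^ 3) ^ t') := by
          rw [Finset.sum_const, smul_eq_mul, Finset.card_univ, hn, Nat.add_sub_cancel]
  -- numeric facts
  have hcat : catalan t' ≤ 4 ^ t' := by
    have h1 : catalan t' ≤ (t' + 1) * catalan t' := Nat.le_mul_of_pos_left _ (by omega)
    rw [succ_mul_catalan_eq_centralBinom] at h1
    have h3 : (2 * t').choose t' ≤ ∑ i ∈ Finset.range (2 * t' + 1), (2 * t').choose i :=
      Finset.single_le_sum (fun i _ => Nat.zero_le _) (Finset.mem_range.mpr (by omega))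
    rw [Nat.sum_range_choose] at h3
    have h4 : Nat.centralBinom t' ≤ 4 ^ t' := by
      calc Nat.centralBinom t' = (2 * t').choose t' := rfl
        _ ≤ 2 ^ (2 * t') := h3
        _ = 4 ^ t' := by rw [pow_mul]; norm_num
    exact h1.trans h4
  have hnpow : n ^ 2 ≤ 2 ^ t' := by
    have hn0 : (0 : ℝ) < n := by positivity
    have hlogb : (2 : ℝ) ^ Real.logb 2 n = n :=
      Real.rpow_logb (by norm_num) (by norm_num) hn0
    have h2L : ((n : ℝ)) ^ (2 : ℕ) = (2 : ℝ) ^ (2 * Real.logb 2 n) := by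
      rw [mul_comm (2 : ℝ) (Real.logb 2 n),
        Real.rpow_mul (by norm_num : (0 : ℝ) ≤ 2), hlogb,
        ← Real.rpow_natCast (n : ℝ) 2]
      norm_num
    have hle : (2 : ℝ) ^ (2 * Real.logb 2 n) ≤ (2 : ℝ) ^ ((t' : ℕ) : ℝ) := by
      apply Real.rpow_le_rpow_of_exponent_le (by norm_num)
      exact Nat.le_ceil _
    have hfin : ((n : ℝ)) ^ (2 : ℕ) ≤ (2 : ℝ) ^ (t' : ℕ) := by
      rw [h2L]
      calc (2 : ℝ) ^ (2 * Real.logb 2 n) ≤ (2 : ℝ) ^ ((t' : ℕ) : ℝ) := hle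
        _ = (2 : ℝ) ^ (t' : ℕ) := Real.rpow_natCast _ _
    exact_mod_cast hfin
  have hkey : 𝒯.card * n ≤ (8 * d ^ 3) ^ (t' + 1) := by
    calc 𝒯.card * n ≤ (n * (catalan t' * (d ^ 3) ^ t')) * n :=
          Nat.mul_le_mul_right _ hcount
      _ ≤ (n * (4 ^ t' * (d ^ 3) ^ t')) * n := by
          refine Nat.mul_le_mul_right _ (Nat.mul_le_mul_left _ ?_)
          exact Nat.mul_le_mul_right _ hcat
      _ = n ^ 2 * (4 ^ t' * (d ^ 3) ^ t') := by ring
      _ ≤ 2 ^ t' * (4 ^ t' * (d ^ 3) ^ t') := Nat.mul_le_mul_right _ hnpow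
      _ = (8 * d ^ 3) ^ t' := by rw [← mul_assoc, ← mul_pow, ← mul_pow]; norm_num
      _ ≤ (8 * d ^ 3) ^ t' * (8 * d ^ 3) := Nat.le_mul_of_pos_right _ (by positivity)
      _ = (8 * d ^ 3) ^ (t' + 1) := (pow_succ _ _).symm
  -- ENNReal bound on the bad event
  have hAcast : ((8 * d ^ 3 : ℕ) : ℝ≥0∞) = 8 * (d : ℝ≥0∞) ^ 3 := by push_cast; ring
  have hAne0 : (8 * (d : ℝ≥0∞) ^ 3) ^ (t' + 1) ≠ 0 := by
    apply pow_ne_zero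
    refine mul_ne_zero (by norm_num) (pow_ne_zero _ ?_)
    exact Nat.cast_ne_zero.mpr (by omega)
  have hAnetop : (8 * (d : ℝ≥0∞) ^ 3) ^ (t' + 1) ≠ ⊤ := by
    apply ENNReal.pow_ne_top
    exact ENNReal.mul_ne_top (by norm_num) (ENNReal.pow_ne_top (ENNReal.natCast_ne_top d))
  have hbadμ : μ bad ≤ 1 / n := by
    calc μ bad ≤ ∑ T ∈ 𝒯, μ (⋂ v ∈ T, B v) := measure_biUnion_finset_le _ _
      _ ≤ ∑ _T ∈ 𝒯, (1 / (8 * (d : ℝ≥0∞) ^ 3)) ^ (t' + 1) := Finset.sum_le_sum hperT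
      _ = 𝒯.card * (1 / (8 * (d : ℝ≥0∞) ^ 3)) ^ (t' + 1) := by
          rw [Finset.sum_const, nsmul_eq_mul]
      _ ≤ 1 / n := by
          rw [one_div, one_div, ← ENNReal.inv_pow]
          rw [ENNReal.le_inv_iff_mul_le]
          have hcast : (𝒯.card : ℝ≥0∞) * n ≤ (8 * (d : ℝ≥0∞) ^ 3) ^ (t' + 1) := by
            rw [← hAcast]
            calc (𝒯.card : ℝ≥0∞) * n = ((𝒯.card * n : ℕ) : ℝ≥0∞) := by push_cast; ring
              _ ≤ (((8 * d ^ 3) ^ (t' + 1) : ℕ) : ℝ≥0∞) := Nat.cast_le.mpr hkey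
              _ = ((8 * d ^ 3 : ℕ) : ℝ≥0∞) ^ (t' + 1) := by push_cast; ring
          calc (𝒯.card : ℝ≥0∞) * ((8 * (d : ℝ≥0∞) ^ 3) ^ (t' + 1))⁻¹ * n
              = ((𝒯.card : ℝ≥0∞) * n) * ((8 * (d : ℝ≥0∞) ^ 3) ^ (t' + 1))⁻¹ := by ring
            _ ≤ ((8 * (d : ℝ≥0∞) ^ 3) ^ (t' + 1)) *
                ((8 * (d : ℝ≥0∞) ^ 3) ^ (t' + 1))⁻¹ := mul_le_mul_left hcast _
            _ = 1 := ENNReal.mul_inv_cancel hAne0 hAnetop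
  -- complement of the bad event is contained in the good event
  have hsub2 : badᶜ ⊆ {ω | ∀ S : Finset V, (G.induce (S : Set V)).Connected →
      (∀ v ∈ S, ω ∈ B v) → (S.card : ℝ) ≤ (d : ℝ) ^ 3 * (2 * Real.logb 2 n + 1)} := by
    intro ω hω
    simp only [Set.mem_setOf_eq]
    intro S hSconn hSB
    by_contra hgt
    push_neg at hgt
    have hd3 : 1 + d + d ^ 2 ≤ d ^ 3 := by nlinarith
    have hL0 : (0 : ℝ) ≤ 2 * Real.logb 2 n :=
      mul_nonneg (by norm_num) (Real.logb_nonneg (by norm_num) (by exact_mod_cast hn2.trans' (by norm_num)))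
    have ht'le : (t' : ℝ) ≤ 2 * Real.logb 2 n + 1 := le_of_lt (Nat.ceil_lt_add_one hL0)
    have hreal : ((t' * (1 + d + d ^ 2) : ℕ) : ℝ) < (S.card : ℝ) := by
      push_cast
      calc (t' : ℝ) * (1 + (d : ℝ) + (d : ℝ) ^ 2)
          ≤ (2 * Real.logb 2 n + 1) * (d : ℝ) ^ 3 := by
            refine mul_le_mul ht'le ?_ (by positivity) (by linarith)
            have : ((1 + d + d ^ 2 : ℕ) : ℝ) ≤ ((d ^ 3 : ℕ) : ℝ) := Nat.cast_le.mpr hd3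
            push_cast at this
            linarith
        _ = (d : ℝ) ^ 3 * (2 * Real.logb 2 n + 1) := mul_comm _ _
        _ < S.card := hgt
    have hsize : t' * (1 + d + d ^ 2) < S.card := by exact_mod_cast hreal
    obtain ⟨T, hTS, hTcard, hTsep, v₀, par, htree⟩ :=
      extract G hdeg H₃ (fun u v h => h) S hSconn t' hsize
    have hT𝒯 : T ∈ 𝒯 := by
      rw [h𝒯, Finset.mem_filter]
      exact ⟨Finset.mem_univ _, hTcard, hTsep, v₀, par, htree⟩
    have hωmem : ω ∈ bad := by
      rw [hbad]
      exact Set.mem_iUnion₂.mpr ⟨T, hT𝒯, Set.mem_iInter₂.mpr (fun v hv => hSB v (hTS hv))⟩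
    exact hω hωmem
  calc 1 - 1 / (n : ℝ≥0∞) ≤ 1 - μ bad := tsub_le_tsub_left hbadμ 1
    _ = μ badᶜ := (prob_compl_eq_one_sub hmeas).symm
    _ ≤ _ := measure_mono hsub2
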